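/- For the scalar quadratic game dynamics Ẍ = -qẎ - μẊ - hX - Y, Ÿ = qẊ - μẎ - hY + X with q = (2+μ²)/μ, and 0 ≤ ρ ≤ min{μ(1+h)/(μ²+μ+1+h), μ/(1+μ)}, the Lyapunov function E_t = ½(Ẋ+μX+μY)² + ½(Ẏ+μY-μX)² + ½(Ẋ²+Ẏ²) + (1+h)(X²+Y²) satisfies Ė_t ≤ -ρE_t, and hence X(t)² + Y(t)² ≤ (E_0/(1+h)) exp(-ρt). -/

import Mathlib

/-- Linear convergence of the continuous-time LEAD dynamics on the scalar quadratic
game: with q = (2+μ²)/μ and 0 ≤ ρ ≤ min{μ(1+h)/(μ²+μ+1+h), μ/(1+μ)},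
Ė_t ≤ -ρE_t and hence X(t)² + Y(t)² ≤ (E_0/(1+h)) exp(-ρt). -/
theorem lead_quadratic_linear_convergence
    (h μ q : ℝ) (hh : 0 < h) (hμ : 0 < μ) (hq : q = (2 + μ ^ 2) / μ)
    (X Y : ℝ → ℝ) (hX : ContDiff ℝ 2 X) (hY : ContDiff ℝ 2 Y)
    (hdX : ∀ t : ℝ, deriv (deriv X) t =
      -q * deriv Y t - μ * deriv X t - h * X t - Y t)
    (hdY : ∀ t : ℝ, deriv (deriv Y) t =
      q * deriv X t - μ * deriv Y t - h * Y t + X t)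
    (E : ℝ → ℝ)
    (hE : ∀ t : ℝ, E t =
      (1/2) * (deriv X t + μ * X t + μ * Y t) ^ 2
        + (1/2) * (deriv Y t + μ * Y t - μ * X t) ^ 2
        + (1/2) * ((deriv X t) ^ 2 + (deriv Y t) ^ 2)
        + (1 + h) * ((X t) ^ 2 + (Y t) ^ 2))
    (ρ : ℝ) (hρ0 : 0 ≤ ρ)
    (hρ : ρ ≤ min (μ * (1 + h) / (μ ^ 2 + μ + 1 + h)) (μ / (1 + μ))) :
    (∀ t : ℝ, deriv E t ≤ -ρ * E t) ∧
    (∀ t : ℝ, 0 ≤ t →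
      (X t) ^ 2 + (Y t) ^ 2 ≤ (E 0 / (1 + h)) * Real.exp (-ρ * t)) := by
  have hμ' : μ ≠ 0 := hμ.ne'
  have hX1 : Differentiable ℝ X := hX.differentiable (by norm_num)
  have hY1 : Differentiable ℝ Y := hY.differentiable (by norm_num)
  have hX2 : Differentiable ℝ (deriv X) := by
    have h2 : ContDiff ℝ ((1:ℕ∞)+1) X := by exact_mod_cast hX
    exact ((contDiff_succ_iff_deriv.mp h2).2.2).differentiable (by norm_num)
  have hY2 : Differentiable ℝ (deriv Y) := by
    have h2 : ContDiff ℝ ((1:ℕ∞)+1) Y := by exact_mod_cast hY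
    exact ((contDiff_succ_iff_deriv.mp h2).2.2).differentiable (by norm_num)
  have hEeq : E = fun t => (1/2) * (deriv X t + μ * X t + μ * Y t) ^ 2
        + (1/2) * (deriv Y t + μ * Y t - μ * X t) ^ 2
        + (1/2) * ((deriv X t) ^ 2 + (deriv Y t) ^ 2)
        + (1 + h) * ((X t) ^ 2 + (Y t) ^ 2) := funext hE
  -- derivative of E
  have hderiv : ∀ t : ℝ, HasDerivAt E
      (-μ * ((deriv X t) ^ 2 + (deriv Y t) ^ 2)
        - μ * (1 + h) * ((X t) ^ 2 + (Y t) ^ 2)) t := by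
    intro t
    have h1 : HasDerivAt X (deriv X t) t := (hX1 t).hasDerivAt
    have h2 : HasDerivAt Y (deriv Y t) t := (hY1 t).hasDerivAt
    have h3 : HasDerivAt (deriv X) (deriv (deriv X) t) t := (hX2 t).hasDerivAt
    have h4 : HasDerivAt (deriv Y) (deriv (deriv Y) t) t := (hY2 t).hasDerivAt
    have T1 := (((h3.add (h1.const_mul μ)).add (h2.const_mul μ)).pow 2).const_mul
      ((1:ℝ)/2)
    have T2 := (((h4.add (h2.const_mul μ)).sub (h1.const_mul μ)).pow 2).const_mul
      ((1:ℝ)/2)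
    have T3 := ((h3.pow 2).add (h4.pow 2)).const_mul ((1:ℝ)/2)
    have T4 := ((h1.pow 2).add (h2.pow 2)).const_mul (1 + h)
    have H := ((T1.add T2).add T3).add T4
    rw [hEeq]
    refine H.congr_deriv ?_
    simp only [Pi.add_apply, Pi.sub_apply]
    rw [hdX t, hdY t, hq]
    field_simp
    ring
  have hEdiff : Differentiable ℝ E := fun t => (hderiv t).differentiableAt
  -- the ρ bounds
  have hden1 : (0:ℝ) < μ ^ 2 + μ + 1 + h := by positivity
  have hden2 : (0:ℝ) < 1 + μ := by linarith
  have hr1 : ρ * (μ ^ 2 + μ + 1 + h) ≤ μ * (1 + h) := by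
    have := (le_min_iff.mp hρ).1
    calc ρ * (μ ^ 2 + μ + 1 + h) ≤ (μ * (1 + h) / (μ ^ 2 + μ + 1 + h)) *
          (μ ^ 2 + μ + 1 + h) := by nlinarith
      _ = μ * (1 + h) := by field_simp
  have hr2 : ρ * (1 + μ) ≤ μ := by
    have := (le_min_iff.mp hρ).2
    calc ρ * (1 + μ) ≤ (μ / (1 + μ)) * (1 + μ) := by nlinarith
      _ = μ := by field_simp
  -- part 1
  have part1 : ∀ t : ℝ, deriv E t ≤ -ρ * E t := by
    intro t
    rw [(hderiv t).deriv, hE t]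
    set x := X t; set y := Y t; set u := deriv X t; set v := deriv Y t
    nlinarith [sq_nonneg u, sq_nonneg v, sq_nonneg x, sq_nonneg y,
      mul_nonneg (mul_nonneg hρ0 hμ.le) (sq_nonneg (u - (x + y))),
      mul_nonneg (mul_nonneg hρ0 hμ.le) (sq_nonneg (v - (y - x))),
      mul_nonneg hρ0 hμ.le,
      mul_nonneg hρ0 (sq_nonneg (x + y)), mul_nonneg hρ0 (sq_nonneg (y - x)),
      mul_le_mul_of_nonneg_right hr2 (by positivity : (0:ℝ) ≤ u ^ 2 + v ^ 2),
      mul_le_mul_of_nonneg_right hr1 (by positivity : (0:ℝ) ≤ x ^ 2 + y ^ 2)]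
  refine ⟨part1, ?_⟩
  -- part 2: Grönwall
  have hG : ∀ t : ℝ, HasDerivAt (fun s => E s * Real.exp (ρ * s))
      (deriv E t * Real.exp (ρ * t) + E t * (Real.exp (ρ * t) * ρ)) t := by
    intro t
    have he : HasDerivAt (fun s => Real.exp (ρ * s)) (Real.exp (ρ * t) * ρ) t := by
      simpa using (((hasDerivAt_id t).const_mul ρ).exp)
    exact (hEdiff t).hasDerivAt.mul he
  have hant : Antitone (fun s => E s * Real.exp (ρ * s)) := by
    apply antitone_of_deriv_nonpos
    · exact fun t => (hG t).differentiableAt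
    · intro t
      rw [(hG t).deriv]
      have h1 := part1 t
      have he : (0:ℝ) < Real.exp (ρ * t) := Real.exp_pos _
      nlinarith [mul_le_mul_of_nonneg_right h1 he.le]
  intro t ht
  have hGle : E t * Real.exp (ρ * t) ≤ E 0 * Real.exp (ρ * 0) := hant ht
  rw [mul_zero, Real.exp_zero, mul_one] at hGle
  have hbound : (1 + h) * ((X t) ^ 2 + (Y t) ^ 2) ≤ E t := by
    rw [hE t]
    have h1 : (0:ℝ) ≤ (1/2) * (deriv X t + μ * X t + μ * Y t) ^ 2 := by positivity
    have h2 : (0:ℝ) ≤ (1/2) * (deriv Y t + μ * Y t - μ * X t) ^ 2 := by positivity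
    have h3 : (0:ℝ) ≤ (1/2) * ((deriv X t) ^ 2 + (deriv Y t) ^ 2) := by positivity
    linarith
  have hep : (0:ℝ) < Real.exp (ρ * t) := Real.exp_pos _
  have h1h : (0:ℝ) < 1 + h := by linarith
  have key : (1 + h) * ((X t) ^ 2 + (Y t) ^ 2) * Real.exp (ρ * t) ≤ E 0 := by
    calc (1 + h) * ((X t) ^ 2 + (Y t) ^ 2) * Real.exp (ρ * t)
        ≤ E t * Real.exp (ρ * t) := by
          exact mul_le_mul_of_nonneg_right hbound hep.le
      _ ≤ E 0 := hGle
  rw [neg_mul, Real.exp_neg]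
  have : (X t) ^ 2 + (Y t) ^ 2 ≤ E 0 / ((1 + h) * Real.exp (ρ * t)) := by
    rw [le_div_iff₀ (by positivity)]
    calc ((X t) ^ 2 + (Y t) ^ 2) * ((1 + h) * Real.exp (ρ * t))
        = (1 + h) * ((X t) ^ 2 + (Y t) ^ 2) * Real.exp (ρ * t) := by ring
      _ ≤ E 0 := key
  calc (X t) ^ 2 + (Y t) ^ 2 ≤ E 0 / ((1 + h) * Real.exp (ρ * t)) := this
    _ = E 0 / (1 + h) * (Real.exp (ρ * t))⁻¹ := by
        field_simp
    _ = E 0 / (1 + h) * (Real.exp (ρ * t))⁻¹ := rfl
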